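/- Let δ ∈ (0, 1/2), p > 1, and let a be a positive integer. Suppose r is a positive real number satisfying p·δ·(3/2)^(p−1) ≤ r/a^(p−1) ≤ p·(1 − δ). Then the distance from (a^p + r)^(1/p) to the nearest integer is strictly greater than δ. -/

import Mathlib

/-- Distance from a real number to the nearest integer. -/
noncomputable def nearestIntDist (t : ℝ) : ℝ := |t - round t|

theorem stmt3 (δ : ℝ) (hδ : δ ∈ Set.Ioo (0:ℝ) (1/2)) (p : ℝ) (hp : 1 < p)
    (a : ℕ) (ha : 0 < a) (r : ℝ) (hr : 0 < r)
    (h1 : p * δ * (3/2) ^ (p - 1) ≤ r / (a : ℝ) ^ (p - 1))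
    (h2 : r / (a : ℝ) ^ (p - 1) ≤ p * (1 - δ)) :
    δ < nearestIntDist (((a : ℝ) ^ p + r) ^ (1 / p)) := by
  obtain ⟨hδ0, hδ2⟩ := hδ
  set A : ℝ := (a : ℝ) with hAdef
  have hA1 : (1 : ℝ) ≤ A := by rw [hAdef]; exact_mod_cast ha
  have hA0 : (0 : ℝ) < A := lt_of_lt_of_le one_pos hA1
  have hp0 : (0 : ℝ) < p := lt_trans one_pos hp
  have hApm : (0 : ℝ) < A ^ (p - 1) := Real.rpow_pos_of_pos hA0 _
  -- translate h1, h2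
  have h1' : p * δ * (3/2) ^ (p - 1) * A ^ (p - 1) ≤ r := (le_div_iff₀ hApm).mp h1
  have h2' : r ≤ p * (1 - δ) * A ^ (p - 1) := (div_le_iff₀ hApm).mp h2
  have hAd : 0 < A + δ := by linarith
  -- Lower bound: (A + δ)^p < A^p + r
  have lower : (A + δ) ^ p < A ^ p + r := by
    set s : ℝ := -δ / (A + δ) with hs
    have hsneg : s < 0 := div_neg_of_neg_of_pos (by linarith) hAd
    have hs1 : -1 ≤ s := by
      rw [hs, neg_div, neg_le_neg_iff, div_le_one hAd]; linarith
    have hB := one_add_mul_self_lt_rpow_one_add hs1 (ne_of_lt hsneg) hp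
    have h1s : (1 + s) = A / (A + δ) := by
      rw [hs]; field_simp; ring
    have key : A ^ p = (A + δ) ^ p * (1 + s) ^ p := by
      rw [h1s, Real.div_rpow hA0.le hAd.le]
      field_simp [ne_of_gt (Real.rpow_pos_of_pos hAd p)]
    have hAdp : 0 < (A + δ) ^ p := Real.rpow_pos_of_pos hAd p
    have key2 : (A + δ) ^ p * (1 + p * s) = (A + δ) ^ p - p * δ * (A + δ) ^ (p - 1) := by
      have : (A + δ) ^ p / (A + δ) = (A + δ) ^ (p - 1) := by
        rw [Real.rpow_sub hAd, Real.rpow_one]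
      have e : (A + δ) ^ p * s = -δ * (A + δ) ^ (p - 1) := by
        rw [hs, ← this]; ring
      calc (A + δ) ^ p * (1 + p * s) = (A + δ) ^ p + p * ((A + δ) ^ p * s) := by ring
        _ = (A + δ) ^ p - p * δ * (A + δ) ^ (p - 1) := by rw [e]; ring
    have hAp_gt : A ^ p > (A + δ) ^ p - p * δ * (A + δ) ^ (p - 1) := by
      rw [key, ← key2]
      exact (mul_lt_mul_iff_right₀ hAdp).mpr hB
    -- (A+δ)^{p-1} ≤ (3/2)^{p-1} * A^{p-1}
    have hmono : (A + δ) ^ (p - 1) ≤ (3/2 * A) ^ (p - 1) := by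
      apply Real.rpow_le_rpow hAd.le (by linarith) (by linarith)
    have hmul : (3/2 * A : ℝ) ^ (p - 1) = (3/2) ^ (p - 1) * A ^ (p - 1) := by
      rw [Real.mul_rpow (by norm_num) hA0.le]
    have : p * δ * (A + δ) ^ (p - 1) ≤ r := by
      calc p * δ * (A + δ) ^ (p - 1) ≤ p * δ * ((3/2) ^ (p - 1) * A ^ (p - 1)) := by
            apply mul_le_mul_of_nonneg_left _ (by positivity)
            rw [← hmul]; exact hmono
        _ = p * δ * (3/2) ^ (p - 1) * A ^ (p - 1) := by ring
        _ ≤ r := h1'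
    linarith
  -- Upper bound: A^p + r < (A + (1 - δ))^p
  have upper : A ^ p + r < (A + (1 - δ)) ^ p := by
    set s : ℝ := (1 - δ) / A with hs
    have hspos : 0 < s := div_pos (by linarith) hA0
    have hB := one_add_mul_self_lt_rpow_one_add (by linarith) (ne_of_gt hspos) hp
    have h1s : (1 + s) = (A + (1 - δ)) / A := by rw [hs]; field_simp
    have key : (A + (1 - δ)) ^ p = A ^ p * (1 + s) ^ p := by
      rw [h1s, Real.div_rpow (by linarith) hA0.le]
      field_simp [ne_of_gt (Real.rpow_pos_of_pos hA0 p)]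
    have hAp : 0 < A ^ p := Real.rpow_pos_of_pos hA0 p
    have key2 : A ^ p * (1 + p * s) = A ^ p + p * (1 - δ) * A ^ (p - 1) := by
      have : A ^ p / A = A ^ (p - 1) := by
        rw [Real.rpow_sub hA0, Real.rpow_one]
      have e : A ^ p * s = (1 - δ) * A ^ (p - 1) := by rw [hs, ← this]; ring
      calc A ^ p * (1 + p * s) = A ^ p + p * (A ^ p * s) := by ring
        _ = A ^ p + p * (1 - δ) * A ^ (p - 1) := by rw [e]; ring
    have : A ^ p + p * (1 - δ) * A ^ (p - 1) < (A + (1 - δ)) ^ p := by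
      rw [key, ← key2]
      exact (mul_lt_mul_iff_right₀ hAp).mpr hB
    linarith
  -- pass to p-th roots
  set t : ℝ := (A ^ p + r) ^ (1 / p) with ht
  have hsum0 : 0 < A ^ p + r := by positivity
  have hroot : ∀ x : ℝ, 0 ≤ x → (x ^ p) ^ (1 / p) = x := fun x hx => by
    rw [← Real.rpow_mul hx, mul_one_div, div_self hp0.ne', Real.rpow_one]
  have hlt1 : A + δ < t := by
    have := Real.rpow_lt_rpow (by positivity) lower (by positivity : (0:ℝ) < 1 / p)
    rwa [hroot _ hAd.le] at this
  have hlt2 : t < A + (1 - δ) := by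
    have := Real.rpow_lt_rpow hsum0.le upper (by positivity : (0:ℝ) < 1 / p)
    rwa [hroot _ (by linarith : (0:ℝ) ≤ A + (1 - δ))] at this
  -- conclude
  rw [nearestIntDist]
  have hr : (round t : ℝ) = round t := rfl
  rcases le_or_gt (round t : ℝ) A with h | h
  · rw [abs_sub_comm, abs_of_nonpos (by linarith)]
    linarith
  · have h' : (a : ℤ) < round t := by rw [hAdef] at h; exact_mod_cast h
    have h'' : (a : ℤ) + 1 ≤ round t := h'
    have hge : (A + 1 : ℝ) ≤ round t := by rw [hAdef]; exact_mod_cast h''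
    rw [abs_of_nonpos (by linarith)]
    linarith
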